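/- Let β ∈ (0,1), and let λ_k be positive reals with λ_k ≥ L₁·k^{(α+γ)/n} for k ≥ k₀, where α+γ > n. Then there exists a constant C > 0 (depending on β, α, γ, n, k₀, L₁) such that for all t > 0, Σ_{k=1}^∞ E_β(-λ_k t^β) ≤ C(1 + t^{-βn/(α+γ)}). -/

import Mathlib

set_option maxHeartbeats 1000000
open MeasureTheory Set Real Filter intervalIntegral FormalMultilinearSeries


/-- Lower bound for the Gamma function. -/
lemma gamma_lb (y R : ℝ) (hy : 1 ≤ y) (hR : 1 ≤ R) :
    R ^ (y - 1) * Real.exp (-(R + 1)) ≤ Real.Gamma y := by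
  have hy0 : (0:ℝ) < y := by linarith
  have hR0 : (0:ℝ) < R := by linarith
  rw [Real.Gamma_eq_integral hy0]
  have hint : IntegrableOn (fun x : ℝ => Real.exp (-x) * x ^ (y - 1)) (Ioi 0) :=
    Real.GammaIntegral_convergent hy0
  have hsub : Ioc R (R+1) ⊆ Ioi (0:ℝ) := fun x hx => lt_of_lt_of_le hR0 hx.1.le
  have h1 : ∫ x in Ioc R (R+1), Real.exp (-x) * x ^ (y - 1) ≤
      ∫ x in Ioi (0:ℝ), Real.exp (-x) * x ^ (y - 1) := by
    apply setIntegral_mono_set hint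
    · filter_upwards [ae_restrict_mem measurableSet_Ioi] with x hx
      exact mul_nonneg (Real.exp_nonneg _) (Real.rpow_nonneg (le_of_lt hx) _)
    · exact HasSubset.Subset.eventuallyLE hsub
  refine le_trans ?_ h1
  have h2 : R ^ (y - 1) * Real.exp (-(R + 1)) * (volume (Ioc R (R+1))).toReal ≤
      ∫ x in Ioc R (R+1), Real.exp (-x) * x ^ (y - 1) := by
    apply setIntegral_ge_of_const_le_real measurableSet_Ioc
    · simp [Real.volume_Ioc]
    · intro x hx
      have hx0 : (0:ℝ) < x := hsub hx
      have : R ^ (y-1) ≤ x ^ (y-1) := Real.rpow_le_rpow hR0.le hx.1.le (by linarith)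
      have he : Real.exp (-(R+1)) ≤ Real.exp (-x) := by
        apply Real.exp_le_exp.mpr; linarith [hx.2]
      calc R ^ (y-1) * Real.exp (-(R+1)) ≤ x ^ (y-1) * Real.exp (-x) := by
            apply mul_le_mul this he (Real.exp_nonneg _) (Real.rpow_nonneg hx0.le _)
        _ = Real.exp (-x) * x ^ (y-1) := mul_comm _ _
    · exact hint.mono_set hsub
  have : (volume (Ioc R (R+1))).toReal = 1 := by
    rw [Real.volume_Ioc]; norm_num
  rw [this, mul_one] at h2
  exact h2

/-- Master summability lemma -/
lemma summable_pow_div_gamma {β : ℝ} (hβ : 0 < β) (b : ℝ) (hb : 0 < b) (r : ℝ) (hr : 0 ≤ r) :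
    Summable (fun m : ℕ => r ^ m / Real.Gamma (m * β + b)) := by
  obtain ⟨N, hN⟩ : ∃ N : ℕ, 1 ≤ (N:ℝ) * β := by
    refine ⟨⌈1/β⌉₊, ?_⟩
    have := Nat.le_ceil (1/β)
    calc (1:ℝ) = (1/β) * β := by field_simp
      _ ≤ (⌈1/β⌉₊ : ℝ) * β := by gcongr
  rw [← summable_nat_add_iff N]
  set b' : ℝ := N * β + b with hb'
  have hb'1 : 1 ≤ b' := by simp only [hb']; linarith
  set R : ℝ := max 1 ((2*r+1) ^ (1/β)) with hRdef
  have hR1 : 1 ≤ R := le_max_left _ _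
  have hR0 : (0:ℝ) < R := lt_of_lt_of_le one_pos hR1
  have hRb : 2*r + 1 ≤ R ^ β := by
    calc 2*r+1 = ((2*r+1) ^ (1/β)) ^ β := by
          rw [← Real.rpow_mul (by linarith), one_div, inv_mul_cancel₀ hβ.ne', Real.rpow_one]
      _ ≤ R ^ β := Real.rpow_le_rpow (Real.rpow_nonneg (by linarith) _) (le_max_right _ _) hβ.le
  set q : ℝ := r / R ^ β with hq
  have hq0 : 0 ≤ q := div_nonneg hr (Real.rpow_nonneg hR0.le _)
  have hq1 : q < 1 := by
    rw [hq, div_lt_one (by positivity)]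
    calc r ≤ 2*r := by linarith
      _ < 2*r+1 := by linarith
      _ ≤ R ^ β := hRb
  set C : ℝ := r ^ N * Real.exp (R+1) * (R ^ (b'-1))⁻¹ with hC
  apply Summable.of_nonneg_of_le (f := fun m => C * q ^ m)
  · intro m
    have : 0 < Real.Gamma (((m + N : ℕ):ℝ) * β + b) := Real.Gamma_pos_of_pos (by positivity)
    positivity
  · intro m
    have hy : ((m + N : ℕ):ℝ) * β + b = (m:ℝ) * β + b' := by push_cast; ring
    rw [hy]
    have hy1 : 1 ≤ (m:ℝ) * β + b' := by
      have : (0:ℝ) ≤ (m:ℝ)*β := by positivity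
      linarith
    have hG := gamma_lb ((m:ℝ)*β + b') R hy1 hR1
    have hGpos : 0 < Real.Gamma ((m:ℝ)*β + b') := Real.Gamma_pos_of_pos (by linarith)
    have hlbpos : 0 < R ^ ((m:ℝ)*β + b' - 1) * Real.exp (-(R+1)) := by positivity
    have h1 : r ^ (m + N) / Real.Gamma ((m:ℝ)*β + b') ≤
        r ^ (m+N) / (R ^ ((m:ℝ)*β + b' - 1) * Real.exp (-(R+1))) := by
      apply div_le_div_of_nonneg_left (by positivity) hlbpos hG
    refine h1.trans (le_of_eq ?_)
    have hsplit : R ^ ((m:ℝ)*β + b' - 1) = (R ^ β) ^ m * R ^ (b' - 1) := by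
      rw [← Real.rpow_natCast (R ^ β) m, ← Real.rpow_mul hR0.le, ← Real.rpow_add hR0]
      ring_nf
    have hRbpos : (0:ℝ) < R ^ β := by positivity
    have hRb'pos : (0:ℝ) < R ^ (b'-1) := by positivity
    rw [hsplit, Real.exp_neg, hC, hq, div_pow, pow_add]
    field_simp
  · exact (summable_geometric_of_lt_one hq0 hq1).mul_left C

noncomputable def mittagLeffler (β x : ℝ) : ℝ :=
  ∑' j : ℕ, x ^ j / Real.Gamma (j * β + 1)


noncomputable def cU (β : ℝ) : ℕ → ℝ := fun j => (-1)^j / Real.Gamma (j*β+1)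
noncomputable def cW (β : ℝ) : ℕ → ℝ := fun m => (-1)^m / Real.Gamma (m*β+β)
noncomputable def Ufn (β : ℝ) : ℝ → ℝ := ofScalarsSum (cU β)
noncomputable def Wfn (β : ℝ) : ℝ → ℝ := ofScalarsSum (cW β)

lemma U_eq (β : ℝ) (x : ℝ) : Ufn β x = ∑' j : ℕ, (-1)^j * x^j / Real.Gamma (j*β+1) := by
  rw [Ufn, ofScalars_sum_eq]
  exact tsum_congr fun j => by rw [cU, smul_eq_mul]; ring

lemma W_eq (β : ℝ) (y : ℝ) : Wfn β y = ∑' m : ℕ, (-1)^m * y^m / Real.Gamma (m*β+β) := by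
  rw [Wfn, ofScalars_sum_eq]
  exact tsum_congr fun j => by rw [cW, smul_eq_mul]; ring

lemma ml_eq_U (β : ℝ) (x : ℝ) : mittagLeffler β (-x) = Ufn β x := by
  rw [U_eq, mittagLeffler]
  exact tsum_congr fun j => by rw [neg_pow]

lemma norm_cU (β : ℝ) (hβ : 0 < β) (j : ℕ) : ‖cU β j‖ = 1 / Real.Gamma (j*β+1) := by
  have : 0 < Real.Gamma (j*β+1) := Real.Gamma_pos_of_pos (by positivity)
  rw [cU, norm_div, norm_pow, norm_neg, norm_one, one_pow, Real.norm_eq_abs, abs_of_pos this]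

lemma norm_cW (β : ℝ) (hβ : 0 < β) (j : ℕ) : ‖cW β j‖ = 1 / Real.Gamma (j*β+β) := by
  have : 0 < Real.Gamma (j*β+β) := Real.Gamma_pos_of_pos (by positivity)
  rw [cW, norm_div, norm_pow, norm_neg, norm_one, one_pow, Real.norm_eq_abs, abs_of_pos this]

lemma radius_U (β : ℝ) (hβ : 0 < β) : (ofScalars ℝ (cU β)).radius = ⊤ := by
  apply FormalMultilinearSeries.radius_eq_top_of_summable_norm
  intro r
  have := (summable_pow_div_gamma hβ 1 one_pos (r:ℝ) r.coe_nonneg)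
  apply this.congr
  intro j
  rw [ofScalars_norm, norm_cU β hβ]
  ring

lemma radius_W (β : ℝ) (hβ : 0 < β) : (ofScalars ℝ (cW β)).radius = ⊤ := by
  apply FormalMultilinearSeries.radius_eq_top_of_summable_norm
  intro r
  have := (summable_pow_div_gamma hβ β hβ (r:ℝ) r.coe_nonneg)
  apply this.congr
  intro j
  rw [ofScalars_norm, norm_cW β hβ]
  ring

lemma U_hasFPSB (β : ℝ) (hβ : 0 < β) :
    HasFPowerSeriesOnBall (Ufn β) (ofScalars ℝ (cU β)) 0 ⊤ := by
  have := (ofScalars ℝ (cU β)).hasFPowerSeriesOnBall (by rw [radius_U β hβ]; exact ENNReal.zero_lt_top)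
  rwa [radius_U β hβ] at this

lemma W_hasFPSB (β : ℝ) (hβ : 0 < β) :
    HasFPowerSeriesOnBall (Wfn β) (ofScalars ℝ (cW β)) 0 ⊤ := by
  have := (ofScalars ℝ (cW β)).hasFPowerSeriesOnBall (by rw [radius_W β hβ]; exact ENNReal.zero_lt_top)
  rwa [radius_W β hβ] at this

lemma U_analyticAt (β : ℝ) (hβ : 0 < β) (y : ℝ) : AnalyticAt ℝ (Ufn β) y :=
  (U_hasFPSB β hβ).analyticAt_of_mem (by simp [EMetric.mem_ball, edist_lt_top])

lemma W_analyticAt (β : ℝ) (hβ : 0 < β) (y : ℝ) : AnalyticAt ℝ (Wfn β) y :=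
  (W_hasFPSB β hβ).analyticAt_of_mem (by simp [EMetric.mem_ball, edist_lt_top])

lemma U_cont (β : ℝ) (hβ : 0 < β) : Continuous (Ufn β) :=
  continuous_iff_continuousAt.mpr fun y => (U_analyticAt β hβ y).continuousAt

lemma W_cont (β : ℝ) (hβ : 0 < β) : Continuous (Wfn β) :=
  continuous_iff_continuousAt.mpr fun y => (W_analyticAt β hβ y).continuousAt

lemma W_zero (β : ℝ) : Wfn β 0 = 1 / Real.Gamma β := by
  rw [Wfn, ofScalarsSum_zero, cW]
  norm_num

lemma rpow_le_max_of_mem {x lo hi c : ℝ} (hlo : 0 < lo) (hx : lo ≤ x) (hx' : x ≤ hi) :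
    x ^ c ≤ max (lo ^ c) (hi ^ c) := by
  rcases le_or_gt 0 c with hc | hc
  · exact le_max_of_le_right (Real.rpow_le_rpow (by linarith) hx' hc)
  · exact le_max_of_le_left (Real.rpow_le_rpow_of_nonpos hlo hx hc.le)

lemma beta_integrableOn {a b t : ℝ} (ha : 0 < a) (hb : 0 < b) (ht : 0 < t) :
    IntegrableOn (fun s => s^(a-1) * (t-s)^(b-1)) (Ioo 0 t) := by
  have hmble : AEStronglyMeasurable (fun s : ℝ => s^(a-1) * (t-s)^(b-1)) (volume.restrict (Ioo 0 t)) := by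
    apply ContinuousOn.aestronglyMeasurable ?_ measurableSet_Ioo
    intro s hs
    apply ContinuousWithinAt.mul
    · exact (Real.continuousAt_rpow_const s _ (Or.inl hs.1.ne')).continuousWithinAt
    · exact (((continuous_const.sub continuous_id).continuousAt).rpow_const
        (Or.inl (by simp [sub_ne_zero]; exact (hs.2).ne'))).continuousWithinAt
  set Ma := max ((t/2) ^ (a-1)) (t ^ (a-1)) with hMa
  set Mb := max ((t/2) ^ (b-1)) (t ^ (b-1)) with hMb
  have hMa0 : 0 ≤ Ma := le_trans (Real.rpow_nonneg ht.le _) (le_max_right _ _)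
  have hMb0 : 0 ≤ Mb := le_trans (Real.rpow_nonneg ht.le _) (le_max_right _ _)
  have hint1 : IntegrableOn (fun s : ℝ => s ^ (a-1)) (Ioo 0 t) := by
    have := intervalIntegral.intervalIntegrable_rpow' (a := 0) (b := t) (r := a-1) (by linarith)
    rw [intervalIntegrable_iff_integrableOn_Ioo_of_le ht.le] at this
    exact this
  have hint2 : IntegrableOn (fun s : ℝ => (t-s) ^ (b-1)) (Ioo 0 t) := by
    have h0 := intervalIntegral.intervalIntegrable_rpow' (a := 0) (b := t) (r := b-1) (by linarith)
    have h1 := h0.comp_sub_left t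
    simp only [sub_zero, sub_self] at h1
    have h2 := h1.symm
    rw [intervalIntegrable_iff_integrableOn_Ioo_of_le ht.le] at h2
    exact h2
  apply Integrable.mono' ((hint1.const_mul Mb).add (hint2.const_mul Ma)) hmble
  · filter_upwards [ae_restrict_mem measurableSet_Ioo] with s hs
    have hs0 : 0 < s := hs.1
    have hst : s < t := hs.2
    have hnn : 0 ≤ s^(a-1) * (t-s)^(b-1) :=
      mul_nonneg (Real.rpow_nonneg hs0.le _) (Real.rpow_nonneg (by linarith) _)
    rw [Real.norm_eq_abs, abs_of_nonneg hnn]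
    rcases le_or_gt s (t/2) with hhalf | hhalf
    · have h1 : (t-s)^(b-1) ≤ Mb := rpow_le_max_of_mem (by linarith) (by linarith) (by linarith)
      calc s^(a-1) * (t-s)^(b-1) ≤ s^(a-1) * Mb := by
            apply mul_le_mul_of_nonneg_left h1 (Real.rpow_nonneg hs0.le _)
        _ ≤ Mb * s^(a-1) + Ma * (t-s)^(b-1) := by
            have : 0 ≤ Ma * (t-s)^(b-1) := mul_nonneg hMa0 (Real.rpow_nonneg (by linarith) _)
            linarith [mul_comm (s^(a-1)) Mb]
    · have h1 : s^(a-1) ≤ Ma := rpow_le_max_of_mem (by linarith) (by linarith) hst.le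
      calc s^(a-1) * (t-s)^(b-1) ≤ Ma * (t-s)^(b-1) := by
            apply mul_le_mul_of_nonneg_right h1 (Real.rpow_nonneg (by linarith) _)
        _ ≤ Mb * s^(a-1) + Ma * (t-s)^(b-1) := by
            have : 0 ≤ Mb * s^(a-1) := mul_nonneg hMb0 (Real.rpow_nonneg hs0.le _)
            linarith

lemma beta_integral_eval {a b t : ℝ} (ha : 0 < a) (hb : 0 < b) (ht : 0 < t) :
    ∫ s in Ioo 0 t, s^(a-1) * (t-s)^(b-1)
      = Real.Gamma a * Real.Gamma b / Real.Gamma (a+b) * t^(a+b-1) := by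
  have hare : 0 < (a:ℂ).re := by simpa using ha
  have hbre : 0 < (b:ℂ).re := by simpa using hb
  -- complex scaled beta integral
  have hscaled := Complex.betaIntegral_scaled (a:ℂ) (b:ℂ) ht
  have hGG := Complex.Gamma_mul_Gamma_eq_betaIntegral hare hbre
  -- identify complex interval integral with real one
  have hcong : (∫ x in (0:ℝ)..t, (x:ℂ) ^ ((a:ℂ) - 1) * ((t:ℂ) - (x:ℂ)) ^ ((b:ℂ) - 1))
      = ((∫ x in (0:ℝ)..t, x ^ (a-1) * (t-x) ^ (b-1) : ℝ) : ℂ) := by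
    rw [← intervalIntegral.integral_ofReal]
    apply intervalIntegral.integral_congr
    intro x hx
    rw [Set.uIcc_of_le ht.le] at hx
    have hx0 : (0:ℝ) ≤ x := hx.1
    have hxt : (0:ℝ) ≤ t - x := by linarith [hx.2]
    push_cast
    rw [Complex.ofReal_cpow hx0, Complex.ofReal_cpow hxt]
    push_cast
    ring
  have hGne : Real.Gamma (a+b) ≠ 0 := (Real.Gamma_pos_of_pos (by linarith)).ne'
  have hGCne : Complex.Gamma ((a:ℂ)+(b:ℂ)) ≠ 0 := by
    rw [← Complex.ofReal_add, Complex.Gamma_ofReal]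
    exact_mod_cast hGne
  have hbeta : Complex.betaIntegral (a:ℂ) (b:ℂ)
      = Complex.Gamma a * Complex.Gamma b / Complex.Gamma ((a:ℂ)+(b:ℂ)) := by
    field_simp at hGG ⊢
    rw [hGG]
  have hval : ((∫ x in (0:ℝ)..t, x ^ (a-1) * (t-x) ^ (b-1) : ℝ) : ℂ)
      = ((Real.Gamma a * Real.Gamma b / Real.Gamma (a+b) * t^(a+b-1) : ℝ) : ℂ) := by
    rw [← hcong, hscaled, hbeta]
    rw [show ((a:ℂ) + b - 1) = (((a+b-1:ℝ)):ℂ) by push_cast; ring]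
    rw [← Complex.ofReal_cpow ht.le]
    push_cast [← Complex.Gamma_ofReal]
    ring
  have := Complex.ofReal_injective hval
  rw [intervalIntegral.integral_of_le ht.le, integral_Ioc_eq_integral_Ioo] at this
  exact this

lemma hpow_aux {t : ℝ} (ht : 0 < t) (β c : ℝ) (m : ℕ) :
    t^c * (t^β)^m = t^((m:ℝ)*β + c) := by
  rw [← Real.rpow_natCast (t^β) m, ← Real.rpow_mul ht.le, ← Real.rpow_add ht]
  ring_nf

lemma v_eq_tsum {β t : ℝ} (ht : 0 < t) :
    t^(β-1) * Wfn β (t^β) = ∑' m:ℕ, (-1)^m * t^((m:ℝ)*β+β-1) / Real.Gamma ((m:ℝ)*β+β) := by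
  rw [W_eq, ← tsum_mul_left]
  apply tsum_congr
  intro m
  rw [show (m:ℝ)*β+β-1 = (m:ℝ)*β + (β-1) by ring, ← hpow_aux ht β (β-1) m]
  ring

lemma summable_U_terms {β : ℝ} (hβ : 0 < β) {x : ℝ} (hx : 0 ≤ x) :
    Summable (fun j:ℕ => (-1)^j * x^j / Real.Gamma ((j:ℝ)*β+1)) := by
  apply Summable.of_norm
  apply ((summable_pow_div_gamma hβ 1 one_pos x hx)).congr
  intro j
  have hG : 0 < Real.Gamma ((j:ℝ)*β+1) := Real.Gamma_pos_of_pos (by positivity)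
  rw [norm_div, norm_mul, norm_pow, norm_neg, norm_one, one_pow, one_mul, norm_pow,
    Real.norm_eq_abs, Real.norm_eq_abs, abs_of_pos hG, abs_of_nonneg hx]

lemma summable_W_terms {β : ℝ} (hβ : 0 < β) {x : ℝ} (hx : 0 ≤ x) :
    Summable (fun j:ℕ => (-1)^j * x^j / Real.Gamma ((j:ℝ)*β+β)) := by
  apply Summable.of_norm
  apply ((summable_pow_div_gamma hβ β hβ x hx)).congr
  intro j
  have hG : 0 < Real.Gamma ((j:ℝ)*β+β) := Real.Gamma_pos_of_pos (by positivity)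
  rw [norm_div, norm_mul, norm_pow, norm_neg, norm_one, one_pow, one_mul, norm_pow,
    Real.norm_eq_abs, Real.norm_eq_abs, abs_of_pos hG, abs_of_nonneg hx]

lemma key_interchange {β d t : ℝ} (hβ : 0 < β) (hd : 0 < d) (ht : 0 < t) :
    ∫ s in Ioo 0 t, (t-s)^(d-1) * (s^(β-1) * Wfn β (s^β))
      = ∑' m:ℕ, (-1)^m * (Real.Gamma d / Real.Gamma ((m:ℝ)*β+β+d)) * t^((m:ℝ)*β+β+d-1) := by
  have hGm : ∀ m:ℕ, (0:ℝ) < Real.Gamma ((m:ℝ)*β+β) :=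
    fun m => Real.Gamma_pos_of_pos (by positivity)
  have hGmd : ∀ m:ℕ, (0:ℝ) < Real.Gamma ((m:ℝ)*β+β+d) :=
    fun m => Real.Gamma_pos_of_pos (by positivity)
  set F : ℕ → ℝ → ℝ :=
    fun m s => ((-1)^m / Real.Gamma ((m:ℝ)*β+β)) * (s^((m:ℝ)*β+β-1) * (t-s)^(d-1)) with hF
  have hFint : ∀ m, Integrable (F m) (volume.restrict (Ioo 0 t)) := by
    intro m
    exact (beta_integrableOn (by positivity : (0:ℝ) < (m:ℝ)*β+β) hd ht).const_mul _
  have hFnorm : ∀ m, ∫ s in Ioo 0 t, ‖F m s‖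
      = (1 / Real.Gamma ((m:ℝ)*β+β)) * (Real.Gamma ((m:ℝ)*β+β) * Real.Gamma d / Real.Gamma ((m:ℝ)*β+β+d) * t^((m:ℝ)*β+β+d-1)) := by
    intro m
    have hcongr : ∀ s ∈ Ioo (0:ℝ) t, ‖F m s‖
        = (1 / Real.Gamma ((m:ℝ)*β+β)) * (s^((m:ℝ)*β+β-1) * (t-s)^(d-1)) := by
      intro s hs
      have h1 : (0:ℝ) ≤ s^((m:ℝ)*β+β-1) := Real.rpow_nonneg hs.1.le _
      have h2 : (0:ℝ) ≤ (t-s)^(d-1) := Real.rpow_nonneg (by linarith [hs.2]) _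
      rw [hF]
      rw [norm_mul, norm_div, norm_pow, norm_neg, norm_one, one_pow, Real.norm_eq_abs,
        Real.norm_eq_abs, abs_of_pos (hGm m), abs_of_nonneg (mul_nonneg h1 h2)]
    rw [setIntegral_congr_fun measurableSet_Ioo hcongr, MeasureTheory.integral_const_mul,
      beta_integral_eval (by positivity) hd ht]
  have hsum : Summable (fun m => ∫ s in Ioo 0 t, ‖F m s‖) := by
    have base := ((summable_pow_div_gamma hβ (β+d) (by positivity) (t^β)
        (Real.rpow_nonneg ht.le _)).mul_left (Real.Gamma d * t^(β+d-1)))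
    apply base.congr
    · intro m
      rw [hFnorm m]
      have e1 : t^((m:ℝ)*β+β+d-1) = t^(β+d-1) * (t^β)^m := by
        rw [hpow_aux ht β (β+d-1) m]; ring_nf
      have e2 : (m:ℝ)*β+(β+d) = (m:ℝ)*β+β+d := by ring
      rw [e1, e2]
      field_simp
  have hcong : ∀ s ∈ Ioo (0:ℝ) t, (t-s)^(d-1) * (s^(β-1) * Wfn β (s^β)) = ∑' m, F m s := by
    intro s hs
    rw [v_eq_tsum hs.1, ← tsum_mul_left]
    apply tsum_congr
    intro m
    rw [hF]
    ring
  rw [setIntegral_congr_fun measurableSet_Ioo hcong,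
    ← MeasureTheory.integral_tsum_of_summable_integral_norm hFint hsum]
  apply tsum_congr
  intro m
  simp only [hF]
  rw [MeasureTheory.integral_const_mul, beta_integral_eval (by positivity) hd ht]
  have := (hGm m).ne'
  field_simp

lemma integrableOn_kernel_v {β d t : ℝ} (hβ : 0 < β) (hd : 0 < d) (ht : 0 < t) :
    IntegrableOn (fun s => (t-s)^(d-1) * (s^(β-1) * Wfn β (s^β))) (Ioo 0 t) := by
  obtain ⟨M, hM⟩ := (isCompact_Icc (a := (0:ℝ)) (b := t^β)).exists_bound_of_continuousOn
      ((W_cont β hβ).continuousOn)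
  have hM0 : 0 ≤ M := le_trans (norm_nonneg _) (hM 0 ⟨le_refl _, Real.rpow_nonneg ht.le _⟩)
  have hmble : AEStronglyMeasurable (fun s : ℝ => (t-s)^(d-1) * (s^(β-1) * Wfn β (s^β)))
      (volume.restrict (Ioo 0 t)) := by
    apply ContinuousOn.aestronglyMeasurable ?_ measurableSet_Ioo
    intro s hs
    apply ContinuousWithinAt.mul
    · exact (((continuous_const.sub continuous_id).continuousAt).rpow_const
        (Or.inl (by simp [sub_ne_zero]; exact (hs.2).ne'))).continuousWithinAt
    · apply ContinuousWithinAt.mul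
      · exact (Real.continuousAt_rpow_const s _ (Or.inl hs.1.ne')).continuousWithinAt
      · exact ((W_cont β hβ).continuousAt.comp
          ((Real.continuousAt_rpow_const s _ (Or.inl hs.1.ne')))).continuousWithinAt
  apply Integrable.mono' ((beta_integrableOn hβ hd ht).const_mul M) hmble
  filter_upwards [ae_restrict_mem measurableSet_Ioo] with s hs
  have hs0 : 0 < s := hs.1
  have hst : 0 < t - s := by linarith [hs.2]
  have h1 : 0 ≤ s^(β-1) := Real.rpow_nonneg hs0.le _
  have h2 : 0 ≤ (t-s)^(d-1) := Real.rpow_nonneg hst.le _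
  have hWb : ‖Wfn β (s^β)‖ ≤ M := hM _ ⟨Real.rpow_nonneg hs0.le _,
    Real.rpow_le_rpow hs0.le hs.2.le hβ.le⟩
  rw [norm_mul, norm_mul, Real.norm_eq_abs ((t-s)^(d-1)), Real.norm_eq_abs (s^(β-1)),
    abs_of_nonneg h1, abs_of_nonneg h2]
  calc (t-s)^(d-1) * (s^(β-1) * ‖Wfn β (s^β)‖) ≤ (t-s)^(d-1) * (s^(β-1) * M) := by
        apply mul_le_mul_of_nonneg_left (mul_le_mul_of_nonneg_left hWb h1) h2
    _ = M * (s^(β-1) * (t-s)^(d-1)) := by ring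

lemma integrableOn_v {β t : ℝ} (hβ : 0 < β) (ht : 0 < t) :
    IntegrableOn (fun s => s^(β-1) * Wfn β (s^β)) (Ioo 0 t) := by
  apply (integrableOn_kernel_v hβ one_pos ht).congr_fun ?_ measurableSet_Ioo
  intro s _
  norm_num

lemma hsumv {β t : ℝ} (hβ : 0 < β) (ht : 0 < t) :
    Summable (fun m:ℕ => (-1)^m * t^((m:ℝ)*β+β-1) / Real.Gamma ((m:ℝ)*β+β)) := by
  apply ((summable_W_terms hβ (Real.rpow_nonneg ht.le β)).mul_left (t^(β-1))).congr
  intro m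
  rw [show (m:ℝ)*β+β-1 = (m:ℝ)*β + (β-1) by ring, ← hpow_aux ht β (β-1) m]
  ring

lemma I1L {β t : ℝ} (hβ : 0 < β) (ht : 0 < t) :
    ∫ s in Ioo 0 t, s^(β-1) * Wfn β (s^β) = 1 - Ufn β (t^β) := by
  have h := key_interchange hβ one_pos ht
  have hker : ∀ s ∈ Ioo (0:ℝ) t, (t-s)^((1:ℝ)-1) * (s^(β-1) * Wfn β (s^β))
      = s^(β-1) * Wfn β (s^β) := by
    intro s _; norm_num
  rw [setIntegral_congr_fun measurableSet_Ioo hker] at h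
  rw [h, U_eq]
  have hsU := summable_U_terms hβ (Real.rpow_nonneg ht.le β)
  rw [Summable.tsum_eq_zero_add hsU]
  have h0 : (-1:ℝ)^(0:ℕ) * (t^β)^(0:ℕ) / Real.Gamma (((0:ℕ):ℝ)*β+1) = 1 := by
    norm_num [Real.Gamma_one]
  rw [h0]
  rw [show ∀ x:ℝ, (1:ℝ) - (1 + x) = -x from fun x => by ring, ← tsum_neg]
  apply tsum_congr
  intro m
  have hGarg : ((m+1:ℕ):ℝ)*β+1 = (m:ℝ)*β+β+1 := by push_cast; ring
  have hexp : (t^β)^(m+1) = t^((m:ℝ)*β+β) := by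
    rw [pow_succ, mul_comm ((t^β)^m) (t^β), hpow_aux ht β β m]
  rw [hGarg, hexp, pow_succ, Real.Gamma_one]
  ring_nf

lemma I2L {β t : ℝ} (hβ : 0 < β) (ht : 0 < t) :
    ∫ s in Ioo 0 t, (t-s)^(β-1) * (s^(β-1) * Wfn β (s^β))
      = t^(β-1) - Real.Gamma β * (t^(β-1) * Wfn β (t^β)) := by
  have h := key_interchange hβ hβ ht
  rw [h, v_eq_tsum ht]
  rw [Summable.tsum_eq_zero_add (hsumv hβ ht)]
  have h0 : (-1:ℝ)^(0:ℕ) * t^(((0:ℕ):ℝ)*β+β-1) / Real.Gamma (((0:ℕ):ℝ)*β+β)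
      = t^(β-1) / Real.Gamma β := by
    norm_num
  rw [h0, mul_add, ← tsum_mul_left]
  have hGβ : Real.Gamma β ≠ 0 := (Real.Gamma_pos_of_pos hβ).ne'
  rw [show Real.Gamma β * (t^(β-1)/Real.Gamma β) = t^(β-1) by field_simp]
  rw [show ∀ x y : ℝ, x - (x + y) = -y from fun x y => by ring, ← tsum_neg]
  apply tsum_congr
  intro m
  have hGarg : ((m+1:ℕ):ℝ)*β+β = (m:ℝ)*β+β+β := by push_cast; ring
  rw [hGarg, pow_succ]
  have hGm : Real.Gamma ((m:ℝ)*β+β+β) ≠ 0 := (Real.Gamma_pos_of_pos (by positivity)).ne'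
  field_simp

lemma I3L {β t : ℝ} (hβ : 0 < β) (ht : 0 < t) :
    ∫ s in Ioo 0 t, (t-s)^β * (s^(β-1) * Wfn β (s^β))
      = t^β - Real.Gamma (β+1) * (1 - Ufn β (t^β)) := by
  have h := key_interchange hβ (by positivity : (0:ℝ) < β+1) ht
  have hker : ∀ s ∈ Ioo (0:ℝ) t, (t-s)^(β+1-1) * (s^(β-1) * Wfn β (s^β))
      = (t-s)^β * (s^(β-1) * Wfn β (s^β)) := by
    intro s _
    rw [show β+1-1 = β by ring]
  rw [setIntegral_congr_fun measurableSet_Ioo hker] at h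
  rw [h, U_eq]
  have hsU := summable_U_terms (β := β) hβ (Real.rpow_nonneg ht.le β)
  rw [Summable.tsum_eq_zero_add hsU, Summable.tsum_eq_zero_add ((summable_nat_add_iff 1).mpr hsU)]
  have h0 : (-1:ℝ)^(0:ℕ) * (t^β)^(0:ℕ) / Real.Gamma (((0:ℕ):ℝ)*β+1) = 1 := by
    norm_num [Real.Gamma_one]
  have h1v : (-1:ℝ)^(0+1:ℕ) * (t^β)^(0+1:ℕ) / Real.Gamma (((0+1:ℕ):ℝ)*β+1)
      = -(t^β)/Real.Gamma (β+1) := by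
    norm_num
  rw [h0, h1v]
  have hGβ1 : Real.Gamma (β+1) ≠ 0 := (Real.Gamma_pos_of_pos (by positivity)).ne'
  rw [show ∀ S:ℝ, t^β - Real.Gamma (β+1) * (1 - (1 + (-(t^β)/Real.Gamma (β+1) + S)))
      = Real.Gamma (β+1) * S from fun S => by field_simp; ring]
  rw [← tsum_mul_left]
  apply tsum_congr
  intro m
  have hGarg : ((m+1+1:ℕ):ℝ)*β+1 = (m:ℝ)*β+β+(β+1) := by push_cast; ring
  have hexp : t^((m:ℝ)*β+β+(β+1)-1) = (t^β)^m * (t^β * t^β) := by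
    rw [show (m:ℝ)*β+β+(β+1)-1 = (m:ℝ)*β+(β+β) by ring, ← hpow_aux ht β (β+β) m,
      Real.rpow_add ht]
    ring
  have hGm : Real.Gamma ((m:ℝ)*β+β+(β+1)) ≠ 0 := (Real.Gamma_pos_of_pos (by positivity)).ne'
  rw [hGarg, hexp]
  field_simp
  ring

lemma v_contAt {β : ℝ} (hβ : 0 < β) {t : ℝ} (ht : 0 < t) :
    ContinuousAt (fun s : ℝ => s^(β-1) * Wfn β (s^β)) t := by
  apply ContinuousAt.mul
  · exact Real.continuousAt_rpow_const t _ (Or.inl ht.ne')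
  · exact ((W_cont β hβ).continuousAt).comp (Real.continuousAt_rpow_const t _ (Or.inl ht.ne'))

lemma W_nonneg {β : ℝ} (hβ0 : 0 < β) (hβ1 : β < 1) : ∀ y, 0 ≤ y → 0 ≤ Wfn β y := by
  have hGβ : 0 < Real.Gamma β := Real.Gamma_pos_of_pos hβ0
  by_contra hcon
  push_neg at hcon
  obtain ⟨y₁, hy₁0, hy₁⟩ := hcon
  have hW0 : 0 < Wfn β 0 := by rw [W_zero]; positivity
  have hy₁pos : 0 < y₁ := by
    rcases eq_or_lt_of_le hy₁0 with he | h
    · exfalso; rw [← he] at hy₁; linarith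
    · exact h
  obtain ⟨δ, hδ0, hδ⟩ := Metric.continuousAt_iff.mp ((W_cont β hβ0).continuousAt (x := 0))
    (Wfn β 0) hW0
  have hposnear : ∀ y : ℝ, |y| < δ → 0 < Wfn β y := by
    intro y hy
    have h2 := hδ (x := y) (by rwa [Real.dist_eq, sub_zero])
    rw [Real.dist_eq] at h2
    have := abs_lt.mp h2
    linarith [this.1]
  set S := {t : ℝ | 0 < t ∧ t^(β-1) * Wfn β (t^β) < 0} with hS
  set t₁ := y₁^(1/β) with ht₁def
  have ht₁pos : 0 < t₁ := Real.rpow_pos_of_pos hy₁pos _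
  have ht₁β : t₁^β = y₁ := by
    rw [ht₁def, ← Real.rpow_mul hy₁0, one_div, inv_mul_cancel₀ hβ0.ne', Real.rpow_one]
  have ht₁S : t₁ ∈ S := by
    refine ⟨ht₁pos, ?_⟩
    rw [ht₁β]
    exact mul_neg_of_pos_of_neg (Real.rpow_pos_of_pos ht₁pos _) hy₁
  have hSbdd : BddBelow S := ⟨0, fun s hs => hs.1.le⟩
  have hSne : S.Nonempty := ⟨t₁, ht₁S⟩
  set t₀ := sInf S with ht₀def
  set ε := δ^(1/β) with hεdef
  have hεpos : 0 < ε := Real.rpow_pos_of_pos hδ0 _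
  have hεβ : ε^β = δ := by
    rw [hεdef, ← Real.rpow_mul hδ0.le, one_div, inv_mul_cancel₀ hβ0.ne', Real.rpow_one]
  have hlb : ∀ s ∈ S, ε ≤ s := by
    intro s hs
    by_contra hlt
    push_neg at hlt
    have hsβ : s^β < δ := by
      have h2 : s^β < ε^β := Real.rpow_lt_rpow hs.1.le hlt hβ0
      rwa [hεβ] at h2
    have hWpos : 0 < Wfn β (s^β) :=
      hposnear _ (by rwa [abs_of_nonneg (Real.rpow_nonneg hs.1.le β)])
    have : 0 < s^(β-1) * Wfn β (s^β) := mul_pos (Real.rpow_pos_of_pos hs.1 _) hWpos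
    linarith [hs.2]
  have ht₀pos : 0 < t₀ := lt_of_lt_of_le hεpos (le_csInf hSne hlb)
  have hvnn : ∀ s, 0 < s → s < t₀ → 0 ≤ s^(β-1) * Wfn β (s^β) := by
    intro s hs0 hst₀
    by_contra hneg
    push_neg at hneg
    exact absurd (csInf_le hSbdd ⟨hs0, hneg⟩) (not_le.mpr hst₀)
  have hvt₀_ge : 0 ≤ t₀^(β-1) * Wfn β (t₀^β) := by
    apply ge_of_tendsto (((v_contAt hβ0 ht₀pos).continuousWithinAt (s := Iio t₀)).tendsto)
    filter_upwards [Ioo_mem_nhdsLT_of_mem (show t₀ ∈ Ioc (t₀/2) t₀ from ⟨by linarith, le_rfl⟩)]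
      with s hs
    exact hvnn s (by linarith [hs.1]) hs.2
  have hvt₀_le : t₀^(β-1) * Wfn β (t₀^β) ≤ 0 := by
    by_contra hpos
    push_neg at hpos
    obtain ⟨η, hη0, hη⟩ := Metric.continuousAt_iff.mp (v_contAt hβ0 ht₀pos) _ hpos
    obtain ⟨s, hsS, hslt⟩ := (csInf_lt_iff hSbdd hSne).mp (show t₀ < t₀+η by linarith)
    have hge := csInf_le hSbdd hsS
    have hd : dist s t₀ < η := by
      rw [Real.dist_eq, abs_lt]
      constructor <;> [linarith; linarith]
    have h2 := hη hd
    rw [Real.dist_eq] at h2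
    have := abs_lt.mp h2
    have : 0 < s^(β-1) * Wfn β (s^β) := by linarith [this.1]
    linarith [hsS.2]
  have hvt₀ : t₀^(β-1) * Wfn β (t₀^β) = 0 := le_antisymm hvt₀_le hvt₀_ge
  rcases (W_analyticAt β hβ0 (t₀^β)).eventually_eq_zero_or_eventually_ne_zero with hA | hB
  · have hzero : EqOn (Wfn β) 0 univ :=
      AnalyticOnNhd.eqOn_zero_of_preconnected_of_eventuallyEq_zero
        (fun z _ => W_analyticAt β hβ0 z) isPreconnected_univ (mem_univ (t₀^β)) hA
    have := hzero (mem_univ 0)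
    simp only [Pi.zero_apply] at this
    rw [this] at hW0
    exact lt_irrefl 0 hW0
  · rw [eventually_nhdsWithin_iff] at hB
    obtain ⟨η, hη0, hη⟩ := Metric.eventually_nhds_iff.mp hB
    obtain ⟨η', hη'0, hη'⟩ := Metric.continuousAt_iff.mp
      (Real.continuousAt_rpow_const t₀ β (Or.inl ht₀pos.ne')) η hη0
    have hvne : ∀ s, t₀ < s → s < t₀+η' → s^(β-1) * Wfn β (s^β) ≠ 0 := by
      intro s h1 h2
      have hd : dist s t₀ < η' := by
        rw [Real.dist_eq, abs_lt]; constructor <;> linarith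
      have hWne : Wfn β (s^β) ≠ 0 := by
        apply hη (hη' hd)
        simp only [mem_compl_iff, mem_singleton_iff]
        exact (Real.rpow_lt_rpow ht₀pos.le h1 hβ0).ne'
      exact mul_ne_zero (Real.rpow_pos_of_pos (lt_trans ht₀pos h1) _).ne' hWne
    obtain ⟨sst, hsstS, hsstlt⟩ := (csInf_lt_iff hSbdd hSne).mp (show t₀ < t₀+η' by linarith)
    have hst₀le : t₀ ≤ sst := csInf_le hSbdd hsstS
    have hst₀ : t₀ < sst := by
      rcases eq_or_lt_of_le hst₀le with he | h
      · exfalso; rw [← he] at hsstS; linarith [hsstS.2, hvt₀.ge]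
      · exact h
    have hsstpos : 0 < sst := hsstS.1
    have hneg : ∀ r, t₀ < r → r < sst → r^(β-1) * Wfn β (r^β) ≤ 0 := by
      intro r h1 h2
      by_contra hp
      push_neg at hp
      have hcont : ContinuousOn (fun s : ℝ => s^(β-1) * Wfn β (s^β)) (Icc r sst) :=
        fun z hz => (v_contAt hβ0 (by linarith [hz.1, lt_trans ht₀pos h1])).continuousWithinAt
      have hIVT := intermediate_value_Icc' (le_of_lt h2) hcont
      obtain ⟨z, hz, hvz⟩ := hIVT ⟨hsstS.2.le, hp.le⟩
      exact hvne z (lt_of_lt_of_le h1 hz.1) (lt_of_le_of_lt hz.2 hsstlt) hvz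
    set c := (sst/t₀)^(β-1) with hcdef
    have hcpos : 0 < c := Real.rpow_pos_of_pos (by positivity) _
    have hI2sst := I2L hβ0 hsstpos
    have hI2t₀ := I2L hβ0 ht₀pos
    have hint_full : IntegrableOn
        (fun s => (sst-s)^(β-1) * (s^(β-1) * Wfn β (s^β))) (Ioo 0 sst) :=
      integrableOn_kernel_v hβ0 hβ0 hsstpos
    have hsplitset : Ioc 0 t₀ ∪ Ioo t₀ sst = Ioo 0 sst := Ioc_union_Ioo_eq_Ioo ht₀pos.le hst₀
    have hint1 : IntegrableOn
        (fun s => (sst-s)^(β-1) * (s^(β-1) * Wfn β (s^β))) (Ioc 0 t₀) :=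
      hint_full.mono_set (by rw [← hsplitset]; exact subset_union_left)
    have hint2 : IntegrableOn
        (fun s => (sst-s)^(β-1) * (s^(β-1) * Wfn β (s^β))) (Ioo t₀ sst) :=
      hint_full.mono_set (by rw [← hsplitset]; exact subset_union_right)
    have hdisj : Disjoint (Ioc (0:ℝ) t₀) (Ioo t₀ sst) := by
      rw [Set.disjoint_left]
      rintro x ⟨_, h1⟩ ⟨h2, _⟩
      exact absurd h2 (not_lt.mpr h1)
    have hI2split : ∫ s in Ioo 0 sst, (sst-s)^(β-1) * (s^(β-1) * Wfn β (s^β))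
        = (∫ s in Ioc 0 t₀, (sst-s)^(β-1) * (s^(β-1) * Wfn β (s^β)))
          + ∫ s in Ioo t₀ sst, (sst-s)^(β-1) * (s^(β-1) * Wfn β (s^β)) := by
      rw [← hsplitset]
      exact setIntegral_union hdisj measurableSet_Ioo hint1 hint2
    have hpiece2 : ∫ s in Ioo t₀ sst, (sst-s)^(β-1) * (s^(β-1) * Wfn β (s^β)) ≤ 0 := by
      apply setIntegral_nonpos measurableSet_Ioo
      intro x hx
      exact mul_nonpos_of_nonneg_of_nonpos (Real.rpow_nonneg (by linarith [hx.2]) _)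
        (hneg x hx.1 hx.2)
    have hptwise : ∀ x ∈ Ioc (0:ℝ) t₀, (sst-x)^(β-1) * (x^(β-1) * Wfn β (x^β))
        ≤ c * ((t₀-x)^(β-1) * (x^(β-1) * Wfn β (x^β))) := by
      intro x hx
      rcases eq_or_lt_of_le hx.2 with he | hlt
      · rw [he, hvt₀, mul_zero, mul_zero, mul_zero]
      · have hvx : 0 ≤ x^(β-1) * Wfn β (x^β) := hvnn x hx.1 hlt
        have h3 : 0 < (sst/t₀)*(t₀-x) := by
          have : 0 < t₀ - x := by linarith
          positivity
        have h2 : (sst/t₀)*(t₀-x) ≤ sst - x := by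
          rw [div_mul_eq_mul_div, div_le_iff₀ ht₀pos]
          have hx0 : 0 ≤ x := hx.1.le
          nlinarith
        have hker : (sst-x)^(β-1) ≤ c * (t₀-x)^(β-1) := by
          have h1 : c * (t₀-x)^(β-1) = ((sst/t₀)*(t₀-x))^(β-1) :=
            (Real.mul_rpow (by positivity) (by linarith)).symm
          rw [h1]
          exact Real.rpow_le_rpow_of_nonpos h3 h2 (by linarith)
        calc (sst-x)^(β-1) * (x^(β-1) * Wfn β (x^β))
            ≤ (c * (t₀-x)^(β-1)) * (x^(β-1) * Wfn β (x^β)) :=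
              mul_le_mul_of_nonneg_right hker hvx
          _ = c * ((t₀-x)^(β-1) * (x^(β-1) * Wfn β (x^β))) := by ring
    have hintRHS : IntegrableOn
        (fun x => c * ((t₀-x)^(β-1) * (x^(β-1) * Wfn β (x^β)))) (Ioc 0 t₀) := by
      rw [integrableOn_Ioc_iff_integrableOn_Ioo]
      exact (integrableOn_kernel_v hβ0 hβ0 ht₀pos).const_mul c
    have hpiece1 : ∫ s in Ioc 0 t₀, (sst-s)^(β-1) * (s^(β-1) * Wfn β (s^β))
        ≤ c * t₀^(β-1) := by
      calc ∫ s in Ioc 0 t₀, (sst-s)^(β-1) * (s^(β-1) * Wfn β (s^β))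
          ≤ ∫ x in Ioc 0 t₀, c * ((t₀-x)^(β-1) * (x^(β-1) * Wfn β (x^β))) :=
            setIntegral_mono_on hint1 hintRHS measurableSet_Ioc hptwise
        _ = c * ∫ x in Ioo 0 t₀, (t₀-x)^(β-1) * (x^(β-1) * Wfn β (x^β)) := by
            rw [integral_Ioc_eq_integral_Ioo, MeasureTheory.integral_const_mul]
        _ = c * (t₀^(β-1) - Real.Gamma β * (t₀^(β-1) * Wfn β (t₀^β))) := by rw [hI2t₀]
        _ = c * t₀^(β-1) := by rw [hvt₀, mul_zero, sub_zero]
    have hc : c * t₀^(β-1) = sst^(β-1) := by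
      rw [hcdef, ← Real.mul_rpow (by positivity) ht₀pos.le, div_mul_cancel₀ _ ht₀pos.ne']
    have hfinal : sst^(β-1) - Real.Gamma β * (sst^(β-1) * Wfn β (sst^β)) ≤ sst^(β-1) := by
      rw [← hI2sst, hI2split]
      linarith [hpiece1, hpiece2, hc]
    have hvs : 0 ≤ sst^(β-1) * Wfn β (sst^β) := by nlinarith [hGβ, hfinal]
    exact absurd hvs (not_le.mpr hsstS.2)

section Ubounds
variable {β : ℝ} (hβ0 : 0 < β) (hβ1 : β < 1)
include hβ0 hβ1

lemma v_nonneg_pt (s : ℝ) (hs : 0 < s) : 0 ≤ s^(β-1) * Wfn β (s^β) :=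
  mul_nonneg (Real.rpow_nonneg hs.le _) (W_nonneg hβ0 hβ1 _ (Real.rpow_nonneg hs.le _))

lemma w_nonneg {t : ℝ} (ht : 0 < t) : 0 ≤ ∫ s in Ioo 0 t, s^(β-1) * Wfn β (s^β) := by
  apply setIntegral_nonneg measurableSet_Ioo
  intro x hx
  exact v_nonneg_pt hβ0 hβ1 x hx.1

lemma w_mono {t₁ t₂ : ℝ} (h1 : 0 < t₁) (h2 : t₁ ≤ t₂) :
    (∫ s in Ioo 0 t₁, s^(β-1) * Wfn β (s^β)) ≤ ∫ s in Ioo 0 t₂, s^(β-1) * Wfn β (s^β) := by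
  apply setIntegral_mono_set (integrableOn_v hβ0 (lt_of_lt_of_le h1 h2))
  · filter_upwards [ae_restrict_mem measurableSet_Ioo] with x hx
    exact v_nonneg_pt hβ0 hβ1 x hx.1
  · exact HasSubset.Subset.eventuallyLE (Ioo_subset_Ioo le_rfl h2)

lemma U_le_one {t : ℝ} (ht : 0 < t) : Ufn β (t^β) ≤ 1 := by
  have := w_nonneg hβ0 hβ1 ht
  rw [I1L hβ0 ht] at this
  linarith

lemma integrableOn_pow_kernel_v {t : ℝ} (ht : 0 < t) :
    IntegrableOn (fun s => (t-s)^β * (s^(β-1) * Wfn β (s^β))) (Ioo 0 t) := by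
  apply (integrableOn_kernel_v hβ0 (by positivity : (0:ℝ) < β+1) ht).congr_fun ?_
    measurableSet_Ioo
  intro s _
  rw [show β+1-1 = β by ring]

lemma U_decay {t : ℝ} (ht : 0 < t) :
    Ufn β (t^β) ≤ Real.Gamma (β+1) / (Real.Gamma (β+1) + t^β) := by
  have hG1 : 0 < Real.Gamma (β+1) := Real.Gamma_pos_of_pos (by positivity)
  have htβ : 0 < t^β := Real.rpow_pos_of_pos ht _
  have h3 := I3L hβ0 ht
  have hub : (∫ s in Ioo 0 t, (t-s)^β * (s^(β-1) * Wfn β (s^β)))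
      ≤ t^β * ∫ s in Ioo 0 t, s^(β-1) * Wfn β (s^β) := by
    rw [← MeasureTheory.integral_const_mul]
    apply setIntegral_mono_on (integrableOn_pow_kernel_v hβ0 hβ1 ht)
      ((integrableOn_v hβ0 ht).const_mul _) measurableSet_Ioo
    intro x hx
    apply mul_le_mul_of_nonneg_right ?_ (v_nonneg_pt hβ0 hβ1 x hx.1)
    exact Real.rpow_le_rpow (by linarith [hx.2]) (by linarith [hx.1]) hβ0.le
  rw [h3] at hub
  set w := ∫ s in Ioo 0 t, s^(β-1) * Wfn β (s^β) with hw
  have hwU : w = 1 - Ufn β (t^β) := I1L hβ0 ht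
  -- t^β - Γ(β+1) w ≤ t^β w  ⇒  w ≥ t^β/(Γ+t^β)
  have hwlb : t^β / (Real.Gamma (β+1) + t^β) ≤ w := by
    rw [div_le_iff₀ (by positivity)]
    nlinarith
  rw [hwU] at hwlb
  rw [le_div_iff₀ (by positivity)]
  nlinarith

lemma U_nonneg {t : ℝ} (ht : 0 < t) : 0 ≤ Ufn β (t^β) := by
  have hG1 : 0 < Real.Gamma (β+1) := Real.Gamma_pos_of_pos (by positivity)
  by_contra hneg
  push_neg at hneg
  set δ := -Ufn β (t^β) with hδdef
  have hδ0 : 0 < δ := by simp [hδdef]; linarith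
  have hw1 : (∫ s in Ioo 0 t, s^(β-1) * Wfn β (s^β)) = 1 + δ := by
    rw [I1L hβ0 ht, hδdef]; ring
  -- key inequality for all T > t
  have key : ∀ T, t < T → Real.Gamma (β+1) * (1+δ) ≤ T^β - (T-t)^β * (1+δ) := by
    intro T hT
    have hT0 : 0 < T := lt_trans ht hT
    have h3 := I3L hβ0 hT0
    have hwT : (1:ℝ) + δ ≤ ∫ s in Ioo 0 T, s^(β-1) * Wfn β (s^β) := by
      rw [← hw1]
      exact w_mono hβ0 hβ1 ht hT.le
    have hlow : (T-t)^β * (1+δ) ≤ ∫ s in Ioo 0 T, (T-s)^β * (s^(β-1) * Wfn β (s^β)) := by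
      have hsub : (∫ s in Ioo 0 t, (T-s)^β * (s^(β-1) * Wfn β (s^β)))
          ≤ ∫ s in Ioo 0 T, (T-s)^β * (s^(β-1) * Wfn β (s^β)) := by
        apply setIntegral_mono_set (integrableOn_pow_kernel_v hβ0 hβ1 hT0)
        · filter_upwards [ae_restrict_mem measurableSet_Ioo] with x hx
          exact mul_nonneg (Real.rpow_nonneg (by linarith [hx.2]) _)
            (v_nonneg_pt hβ0 hβ1 x hx.1)
        · exact HasSubset.Subset.eventuallyLE (Ioo_subset_Ioo le_rfl hT.le)
      have hlow2 : (T-t)^β * (1+δ) ≤ ∫ s in Ioo 0 t, (T-s)^β * (s^(β-1) * Wfn β (s^β)) := by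
        rw [← hw1, ← MeasureTheory.integral_const_mul]
        apply setIntegral_mono_on ((integrableOn_v hβ0 ht).const_mul _)
          ((integrableOn_pow_kernel_v hβ0 hβ1 hT0).mono_set (Ioo_subset_Ioo le_rfl hT.le))
          measurableSet_Ioo
        intro x hx
        apply mul_le_mul_of_nonneg_right ?_ (v_nonneg_pt hβ0 hβ1 x hx.1)
        exact Real.rpow_le_rpow (by linarith [hT]) (by linarith [hx.2]) hβ0.le
      linarith
    have hGw : Real.Gamma (β+1) * (1+δ) ≤ Real.Gamma (β+1) *
        ∫ s in Ioo 0 T, s^(β-1) * Wfn β (s^β) := by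
      apply mul_le_mul_of_nonneg_left hwT hG1.le
    -- from I3L : ∫ (T-s)^β v = T^β - Γ(β+1) * w(T)
    have : Real.Gamma (β+1) * (∫ s in Ioo 0 T, s^(β-1) * Wfn β (s^β))
        = T^β - ∫ s in Ioo 0 T, (T-s)^β * (s^(β-1) * Wfn β (s^β)) := by
      rw [h3, I1L hβ0 hT0]; ring
    linarith
  -- choose T large for contradiction
  set c₁ := (1+δ/2)^(1/β) - 1 with hc₁def
  have hc₁ : 0 < c₁ := by
    rw [hc₁def, sub_pos]
    exact (Real.one_lt_rpow_iff_of_pos (by linarith)).mpr (Or.inl ⟨by linarith, by positivity⟩)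
  set B := (2*Real.Gamma (β+1)*(1+δ)/δ)^(1/β) with hBdef
  have hB0 : 0 < B := Real.rpow_pos_of_pos (by positivity) _
  set T := t + max (t/c₁) B with hTdef
  have hTt : 0 < max (t/c₁) B := lt_max_of_lt_right hB0
  have hT : t < T := by rw [hTdef]; linarith
  have hTmt : T - t = max (t/c₁) B := by rw [hTdef]; ring
  have hTmt0 : 0 < T - t := by rw [hTmt]; exact hTt
  have hkey := key T hT
  -- (T-t)^β ≥ 2Γ(1+δ)/δ
  have h1 : 2*Real.Gamma (β+1)*(1+δ)/δ ≤ (T-t)^β := by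
    calc 2*Real.Gamma (β+1)*(1+δ)/δ = (B)^β := by
          rw [hBdef, ← Real.rpow_mul (by positivity), one_div,
            inv_mul_cancel₀ hβ0.ne', Real.rpow_one]
      _ ≤ (T-t)^β := Real.rpow_le_rpow hB0.le (by rw [hTmt]; exact le_max_right _ _) hβ0.le
  -- (T/(T-t))^β ≤ 1+δ/2
  have h2 : (T/(T-t))^β ≤ 1 + δ/2 := by
    have hTdiv : T/(T-t) ≤ 1 + c₁ := by
      rw [div_le_iff₀ hTmt0]
      have htc : t ≤ c₁ * (T-t) := by
        rw [hTmt]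
        calc t = c₁ * (t/c₁) := by field_simp
          _ ≤ c₁ * max (t/c₁) B := by
              apply mul_le_mul_of_nonneg_left (le_max_left _ _) hc₁.le
      linarith
    calc (T/(T-t))^β ≤ (1+c₁)^β := Real.rpow_le_rpow (by positivity) hTdiv hβ0.le
      _ = 1 + δ/2 := by
          rw [hc₁def, show (1:ℝ) + ((1+δ/2)^(1/β) - 1) = (1+δ/2)^(1/β) by ring,
            ← Real.rpow_mul (by linarith), one_div, inv_mul_cancel₀ hβ0.ne', Real.rpow_one]
  -- T^β = (T-t)^β * (T/(T-t))^β
  have hTsplit : T^β = (T-t)^β * (T/(T-t))^β := by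
    rw [← Real.mul_rpow hTmt0.le (by positivity)]
    congr 1
    field_simp
  rw [hTsplit] at hkey
  have hbad : (T-t)^β * (T/(T-t))^β - (T-t)^β * (1+δ)
      ≤ (T-t)^β * (-(δ/2)) := by
    have hTb : 0 ≤ (T-t)^β := Real.rpow_nonneg hTmt0.le _
    nlinarith
  have hbad2 : (T-t)^β * (-(δ/2)) ≤ -(Real.Gamma (β+1)*(1+δ)) := by
    have := mul_le_mul_of_nonneg_right h1 (le_of_lt (by linarith : (0:ℝ) < δ/2))
    calc (T-t)^β * (-(δ/2)) = -((T-t)^β * (δ/2)) := by ring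
      _ ≤ -((2*Real.Gamma (β+1)*(1+δ)/δ) * (δ/2)) := by linarith
      _ = -(Real.Gamma (β+1)*(1+δ)) := by field_simp
  nlinarith

end Ubounds

lemma ml_bounds {β : ℝ} (hβ0 : 0 < β) (hβ1 : β < 1) {x : ℝ} (hx : 0 < x) :
    0 ≤ mittagLeffler β (-x) ∧
      mittagLeffler β (-x) ≤ Real.Gamma (β+1) / (Real.Gamma (β+1) + x) := by
  set t := x^(1/β) with htdef
  have ht : 0 < t := Real.rpow_pos_of_pos hx _
  have htβ : t^β = x := by
    rw [htdef, ← Real.rpow_mul hx.le, one_div, inv_mul_cancel₀ hβ0.ne', Real.rpow_one]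
  rw [ml_eq_U, ← htβ]
  exact ⟨U_nonneg hβ0 hβ1 ht, U_decay hβ0 hβ1 ht⟩

lemma mvt_rpow {m p : ℝ} (hm : 2 ≤ m) (hp : 1 < p) :
    m^(-p) * (p-1) ≤ (m-1)^(1-p) - m^(1-p) := by
  have hm1 : (1:ℝ) ≤ m - 1 := by linarith
  have hm0 : (0:ℝ) < m := by linarith
  have hcont : ContinuousOn (fun x : ℝ => x^(1-p)) (Icc (m-1) m) := by
    intro x hx
    exact (Real.continuousAt_rpow_const x _ (Or.inl (by linarith [hx.1] : x ≠ 0))).continuousWithinAt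
  have hderiv : ∀ x ∈ Ioo (m-1) m, HasDerivAt (fun x : ℝ => x^(1-p)) ((1-p) * x^(1-p-1)) x := by
    intro x hx
    exact Real.hasDerivAt_rpow_const (Or.inl (by linarith [hx.1] : x ≠ 0))
  obtain ⟨c, hc, hceq⟩ := exists_hasDerivAt_eq_slope (fun x : ℝ => x^(1-p))
    (fun x => (1-p) * x^(1-p-1)) (by linarith : m-1 < m) hcont hderiv
  have hc0 : 0 < c := by linarith [hc.1]
  have hcm : c ≤ m := hc.2.le
  have hrw : m - (m-1) = 1 := by ring
  rw [hrw, div_one] at hceq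
  have hmono : m^(-p) ≤ c^(-p) :=
    Real.rpow_le_rpow_of_nonpos hc0 hcm (by linarith)
  have he : 1-p-1 = -p := by ring
  rw [he] at hceq
  have : m^(1-p) - (m-1)^(1-p) = (1-p) * c^(-p) := hceq.symm
  nlinarith [this, hmono]

lemma tail_sum {p : ℝ} (hp : 1 < p) {N : ℕ} (hN : 2 ≤ N) :
    ∑' k : ℕ, ((k+N : ℕ):ℝ)^(-p) ≤ ((N:ℝ)-1)^(1-p) / (p-1) := by
  have hp1 : (0:ℝ) < p - 1 := by linarith
  apply Real.tsum_le_of_sum_range_le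
  · intro n
    exact Real.rpow_nonneg (by positivity) _
  · intro n
    set g : ℕ → ℝ := fun k => ((k:ℝ)+(N:ℝ)-1)^(1-p) with hg
    have hterm : ∀ k : ℕ, ((k+N : ℕ):ℝ)^(-p) ≤ (g k - g (k+1)) / (p-1) := by
      intro k
      have hm : (2:ℝ) ≤ (k:ℝ)+(N:ℝ) := by
        have : (2:ℝ) ≤ (N:ℝ) := by exact_mod_cast hN
        have : (0:ℝ) ≤ (k:ℝ) := Nat.cast_nonneg k
        linarith
      have := mvt_rpow hm hp
      rw [le_div_iff₀ hp1]
      have hcast : ((k+N:ℕ):ℝ) = (k:ℝ)+(N:ℝ) := by push_cast; ring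
      rw [hcast, hg]
      have e1 : ((k:ℝ)+1+(N:ℝ)-1) = (k:ℝ)+(N:ℝ) := by ring
      simp only [Nat.cast_add, Nat.cast_one]
      rw [e1]
      calc ((k:ℝ)+(N:ℝ))^(-p) * (p-1) ≤ ((k:ℝ)+(N:ℝ)-1)^(1-p) - ((k:ℝ)+(N:ℝ))^(1-p) := this
        _ = ((k:ℝ)+(N:ℝ)-1)^(1-p) - ((k:ℝ)+(N:ℝ))^(1-p) := rfl
    calc ∑ k ∈ Finset.range n, ((k+N : ℕ):ℝ)^(-p)
        ≤ ∑ k ∈ Finset.range n, (g k - g (k+1)) / (p-1) :=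
          Finset.sum_le_sum (fun k _ => hterm k)
      _ = (∑ k ∈ Finset.range n, (g k - g (k+1))) / (p-1) := by
          rw [Finset.sum_div]
      _ = (g 0 - g n) / (p-1) := by rw [Finset.sum_range_sub' g]
      _ ≤ g 0 / (p-1) := by
          have h0 : 0 ≤ g n := Real.rpow_nonneg (by
            have h2 : (2:ℝ) ≤ (N:ℝ) := by exact_mod_cast hN
            have h3 : (0:ℝ) ≤ (n:ℝ) := Nat.cast_nonneg n
            linarith) _
          gcongr
          linarith
      _ = ((N:ℝ)-1)^(1-p) / (p-1) := by
          rw [hg]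
          norm_num

theorem tsum_mittagLeffler_bound (β α γ L₁ : ℝ) (n k₀ : ℕ)
    (hn : 1 ≤ n) (hβ : β ∈ Set.Ioo (0 : ℝ) 1) (hL : 0 < L₁) (h : (n : ℝ) < α + γ)
    (lam : ℕ → ℝ) (hpos : ∀ k, 0 < lam k)
    (hgrow : ∀ k, k₀ ≤ k → L₁ * (k : ℝ) ^ ((α + γ) / (n : ℝ)) ≤ lam k) :
    ∃ C : ℝ, 0 < C ∧ ∀ t : ℝ, 0 < t →
      (∑' k : ℕ, mittagLeffler β (-(lam k * t ^ β))) ≤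
        C * (1 + t ^ (-(β * (n : ℝ)) / (α + γ))) := by
  obtain ⟨hβ0, hβ1⟩ := hβ
  set G := Real.Gamma (β+1) with hGdef
  have hG : 0 < G := Real.Gamma_pos_of_pos (by positivity)
  have hn0 : (0:ℝ) < (n:ℝ) := by
    have : (1:ℝ) ≤ (n:ℝ) := by exact_mod_cast hn
    linarith
  set p := (α+γ)/(n:ℝ) with hpdef
  have hp : 1 < p := (one_lt_div hn0).mpr h
  have hp1 : 0 < p - 1 := by linarith
  have hGL : 0 < G/L₁ := div_pos hG hL
  set D := (1 + 1/(p-1)) * (G/L₁)^(1/p) with hDdef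
  have hD : 0 < D := by
    apply mul_pos ?_ (Real.rpow_pos_of_pos hGL _)
    have := div_pos one_pos hp1
    linarith
  have hαγ : 0 < α + γ := by linarith
  refine ⟨(k₀:ℝ) + 3 + D, by have := Nat.cast_nonneg (α := ℝ) k₀; linarith, ?_⟩
  intro t ht
  have hx : 0 < t^β := Real.rpow_pos_of_pos ht β
  set f : ℕ → ℝ := fun k => mittagLeffler β (-(lam k * t^β)) with hfdef
  have hfb : ∀ k, 0 ≤ f k ∧ f k ≤ G/(G + lam k * t^β) :=
    fun k => ml_bounds hβ0 hβ1 (mul_pos (hpos k) hx)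
  have hf1 : ∀ k, f k ≤ 1 := by
    intro k
    refine (hfb k).2.trans ?_
    rw [div_le_one (by have := mul_pos (hpos k) hx; linarith)]
    nlinarith [mul_pos (hpos k) hx]
  set A := G/(L₁ * t^β) with hAdef
  have hA : 0 < A := by positivity
  have hA1p : 0 < A^(1/p) := Real.rpow_pos_of_pos hA _
  set N := max k₀ 2 + ⌈A^(1/p)⌉₊ with hNdef
  have hN2 : 2 ≤ N := le_trans (le_max_right k₀ 2) (Nat.le_add_right _ _)
  have hNk₀ : k₀ ≤ N := le_trans (le_max_left k₀ 2) (Nat.le_add_right _ _)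
  have hNA : A^(1/p) ≤ (N:ℝ) - 1 := by
    have h1 : A^(1/p) ≤ (⌈A^(1/p)⌉₊:ℝ) := Nat.le_ceil _
    have h2 : ((max k₀ 2:ℕ):ℝ) ≥ 2 := by
      have : (2:ℕ) ≤ max k₀ 2 := le_max_right _ _
      exact_mod_cast this
    have h3 : (N:ℝ) = ((max k₀ 2:ℕ):ℝ) + (⌈A^(1/p)⌉₊:ℝ) := by
      rw [hNdef]; push_cast; ring
    linarith
  have htail : ∀ k:ℕ, f (k+N) ≤ A * ((k+N:ℕ):ℝ)^(-p) := by
    intro k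
    have hk0 : k₀ ≤ k+N := le_trans hNk₀ (Nat.le_add_left N k)
    have hgr := hgrow (k+N) hk0
    have hkN1 : (1:ℝ) ≤ ((k+N:ℕ):ℝ) := by
      have : 1 ≤ k+N := by omega
      exact_mod_cast this
    have hkNpos : (0:ℝ) < ((k+N:ℕ):ℝ) := by linarith
    have hkp : 0 < ((k+N:ℕ):ℝ)^p := Real.rpow_pos_of_pos hkNpos p
    have hlam := hpos (k+N)
    calc f (k+N) ≤ G/(G + lam (k+N) * t^β) := (hfb (k+N)).2
      _ ≤ G/(lam (k+N) * t^β) :=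
          div_le_div_of_nonneg_left hG.le (mul_pos hlam hx) (by nlinarith)
      _ ≤ G/(L₁ * ((k+N:ℕ):ℝ)^p * t^β) := by
          apply div_le_div_of_nonneg_left hG.le (by positivity)
          exact mul_le_mul_of_nonneg_right hgr hx.le
      _ = A * ((k+N:ℕ):ℝ)^(-p) := by
          have hne1 : ((k+N:ℕ):ℝ)^p ≠ 0 := hkp.ne'
          have hne2 : t^β ≠ 0 := hx.ne'
          have hne3 : L₁ ≠ 0 := hL.ne'
          rw [hAdef, Real.rpow_neg hkNpos.le, div_mul_eq_mul_div,
            div_eq_div_iff (by positivity) (by positivity)]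
          field_simp
          try ring
  have hsum_shift : Summable (fun k:ℕ => ((k+N:ℕ):ℝ)^(-p)) := by
    have hs : Summable (fun k:ℕ => ((k:ℕ):ℝ)^(-p)) :=
      Real.summable_nat_rpow.mpr (by linarith)
    exact (summable_nat_add_iff N).mpr hs
  have hsum_tail : Summable (fun k:ℕ => A * ((k+N:ℕ):ℝ)^(-p)) := hsum_shift.mul_left A
  have hsumfN : Summable (fun k => f (k+N)) :=
    Summable.of_nonneg_of_le (fun k => (hfb (k+N)).1) htail hsum_tail
  have hsumf : Summable f := (summable_nat_add_iff N).mp hsumfN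
  have hhead : ∑ i ∈ Finset.range N, f i ≤ (N:ℝ) := by
    calc ∑ i ∈ Finset.range N, f i ≤ ∑ _i ∈ Finset.range N, (1:ℝ) :=
        Finset.sum_le_sum (fun i _ => hf1 i)
      _ = (N:ℝ) := by simp
  have hAmul : A * (A^(1/p))^(1-p) = A^(1/p) := by
    rw [← Real.rpow_mul hA.le]
    nth_rewrite 1 [show A = A^(1:ℝ) from (Real.rpow_one A).symm]
    rw [← Real.rpow_add hA]
    congr 1
    field_simp
    ring
  have htailsum : (∑' k, f (k+N)) ≤ A^(1/p) / (p-1) := by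
    calc ∑' k, f (k+N) ≤ ∑' k, A * ((k+N:ℕ):ℝ)^(-p) :=
          Summable.tsum_le_tsum htail hsumfN hsum_tail
      _ = A * ∑' k, ((k+N:ℕ):ℝ)^(-p) := tsum_mul_left
      _ ≤ A * (((N:ℝ)-1)^(1-p)/(p-1)) :=
          mul_le_mul_of_nonneg_left (tail_sum hp hN2) hA.le
      _ ≤ A^(1/p)/(p-1) := by
          have h1 : ((N:ℝ)-1)^(1-p) ≤ (A^(1/p))^(1-p) :=
            Real.rpow_le_rpow_of_nonpos hA1p hNA (by linarith)
          calc A * (((N:ℝ)-1)^(1-p)/(p-1)) = (A * ((N:ℝ)-1)^(1-p))/(p-1) := by ring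
            _ ≤ (A * (A^(1/p))^(1-p))/(p-1) := by gcongr
            _ = A^(1/p)/(p-1) := by rw [hAmul]
  have hNb : (N:ℝ) ≤ (k₀:ℝ) + 3 + A^(1/p) := by
    have h1 : (⌈A^(1/p)⌉₊:ℝ) < A^(1/p) + 1 := Nat.ceil_lt_add_one (Real.rpow_nonneg hA.le _)
    have h2 : ((max k₀ 2:ℕ):ℝ) ≤ (k₀:ℝ) + 2 := by
      have : max k₀ 2 ≤ k₀ + 2 := by omega
      exact_mod_cast this
    have h3 : (N:ℝ) = ((max k₀ 2:ℕ):ℝ) + (⌈A^(1/p)⌉₊:ℝ) := by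
      rw [hNdef]; push_cast; ring
    linarith
  set τ := t ^ (-(β * (n:ℝ)) / (α + γ)) with hτdef
  have hτ : 0 < τ := Real.rpow_pos_of_pos ht _
  have hAval : A^(1/p) = (G/L₁)^(1/p) * τ := by
    have e1 : A = (G/L₁) * t^(-β) := by
      rw [hAdef, Real.rpow_neg ht.le, div_mul_eq_div_div]
      ring
    rw [e1, Real.mul_rpow hGL.le (Real.rpow_nonneg ht.le _), ← Real.rpow_mul ht.le]
    congr 2
    rw [hpdef]
    field_simp
    try ring
  have hmain : (∑' k, f k) ≤ (k₀:ℝ) + 3 + D * τ := by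
    rw [← Summable.sum_add_tsum_nat_add N hsumf]
    have : D * τ = (1 + 1/(p-1)) * A^(1/p) := by
      rw [hDdef, hAval]; ring
    rw [this]
    have hfin : A^(1/p)/(p-1) = (1/(p-1)) * A^(1/p) := by ring
    calc (∑ i ∈ Finset.range N, f i) + ∑' k, f (k+N)
        ≤ (N:ℝ) + A^(1/p)/(p-1) := add_le_add hhead htailsum
      _ ≤ ((k₀:ℝ) + 3 + A^(1/p)) + (1/(p-1)) * A^(1/p) := by rw [hfin]; linarith
      _ = (k₀:ℝ) + 3 + (1 + 1/(p-1)) * A^(1/p) := by ring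
  calc (∑' k, f k) ≤ (k₀:ℝ) + 3 + D * τ := hmain
    _ ≤ ((k₀:ℝ) + 3 + D) * (1 + τ) := by nlinarith
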